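/- arXiv:1410.2961 — 2 statements merged into one kernel-verified Lean document; each statement's English description precedes it below -/
import Mathlib

section
/- Every decision (δ₀,δ₁) with 0 < δ₀ < δ₁ < 1 is admissible: no decision δ' ∈ [0,1]² dominates (δ₀,δ₁). -/
open scoped ENNReal

/-- The Kullback–Leibler loss `L(θ,d) = θ·log(θ/d) + (1−θ)·log((1−θ)/(1−d)) ∈ [0,∞]`,
with the conventions `0 · log(0/c) = 0` and `c · log(c/0) = +∞` for `c > 0`.
(When `θ = 0` or `θ = 1`, the corresponding vanishing term is `0` automatically
since `Real.log 0 = 0` in Lean.) -/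
noncomputable def KLoss (θ d : ℝ) : ℝ≥0∞ :=
  if (θ ≠ 0 ∧ d = 0) ∨ (θ ≠ 1 ∧ d = 1) then ⊤
  else ENNReal.ofReal
    (θ * Real.log (θ / d) + (1 - θ) * Real.log ((1 - θ) / (1 - d)))

/-- The risk function `R_δ(θ) = (1−θ)·L(θ,δ₀) + θ·L(θ,δ₁) ∈ [0,∞]`
of a decision `δ = (δ₀, δ₁)`. -/
noncomputable def risk (δ : ℝ × ℝ) (θ : ℝ) : ℝ≥0∞ :=
  ENNReal.ofReal (1 - θ) * KLoss θ δ.1 + ENNReal.ofReal θ * KLoss θ δ.2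

/-- `δ'` dominates `δ`: `R_{δ'} ≤ R_δ` on `[0,1]`, with strict inequality somewhere. -/
def Dominates (δ' δ : ℝ × ℝ) : Prop :=
  (∀ θ ∈ Set.Icc (0 : ℝ) 1, risk δ' θ ≤ risk δ θ) ∧
  (∃ θ ∈ Set.Icc (0 : ℝ) 1, risk δ' θ < risk δ θ)


noncomputable def Sfun (θ a b : ℝ) : ℝ :=
  (1 - θ) * (θ * Real.log (θ / a) + (1 - θ) * Real.log ((1 - θ) / (1 - a))) +
  θ * (θ * Real.log (θ / b) + (1 - θ) * Real.log ((1 - θ) / (1 - b)))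

lemma mul_log_div_ge {a b : ℝ} (ha : 0 ≤ a) (hb : 0 < b) :
    a - b ≤ a * Real.log (a / b) := by
  rcases eq_or_lt_of_le ha with h | h
  · simp [← h]; linarith
  · have h1 : Real.log (b / a) ≤ b / a - 1 := Real.log_le_sub_one_of_pos (by positivity)
    have h2 : Real.log (a / b) = - Real.log (b / a) := by
      rw [Real.log_div hb.ne' h.ne', Real.log_div h.ne' hb.ne']; ring
    have h3 : a * (b / a) = b := by field_simp
    nlinarith [mul_le_mul_of_nonneg_left h1 h.le]

lemma kl_nonneg {θ d : ℝ} (hθ0 : 0 ≤ θ) (hθ1 : θ ≤ 1) (hd0 : 0 < d) (hd1 : d < 1) :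
    0 ≤ θ * Real.log (θ / d) + (1 - θ) * Real.log ((1 - θ) / (1 - d)) := by
  have h1 := mul_log_div_ge hθ0 hd0
  have h2 := mul_log_div_ge (show (0:ℝ) ≤ 1 - θ by linarith) (show (0:ℝ) < 1 - d by linarith)
  linarith

lemma key_log_ineq {x y : ℝ} (hx : 0 < x) (hxy : x < y) (hy : y < 1) :
    (1 - y) * (Real.log (1 - x) - Real.log (1 - y)) < y * (Real.log y - Real.log x) := by
  have hy0 : 0 < y := hx.trans hxy
  have h1x : 0 < 1 - x := by linarith
  have h1y : 0 < 1 - y := by linarith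
  have h1 : Real.log ((1 - x) / (1 - y)) < (1 - x) / (1 - y) - 1 :=
    Real.log_lt_sub_one_of_pos (by positivity) (by
      intro h
      rw [div_eq_one_iff_eq h1y.ne'] at h
      linarith)
  have h2 : Real.log (x / y) < x / y - 1 :=
    Real.log_lt_sub_one_of_pos (by positivity) (by
      intro h
      rw [div_eq_one_iff_eq hy0.ne'] at h
      linarith)
  rw [Real.log_div h1x.ne' h1y.ne'] at h1
  rw [Real.log_div hx.ne' hy0.ne'] at h2
  have hc1 : (1 - y) * ((1 - x) / (1 - y)) = 1 - x := by field_simp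
  have hc2 : y * (x / y) = x := by field_simp
  nlinarith [mul_lt_mul_of_pos_left h1 h1y, mul_lt_mul_of_pos_left h2 hy0]

lemma key_log_ineq' {x y : ℝ} (hx : 0 < x) (hxy : x < y) (hy : y < 1) :
    x * (Real.log y - Real.log x) < (1 - x) * (Real.log (1 - x) - Real.log (1 - y)) := by
  have := key_log_ineq (x := 1 - y) (y := 1 - x) (by linarith) (by linarith) (by linarith)
  simp only [sub_sub_cancel] at this
  linarith

lemma KLoss_eq {θ d : ℝ} (hd0 : d ≠ 0) (hd1 : d ≠ 1) :
    KLoss θ d = ENNReal.ofReal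
      (θ * Real.log (θ / d) + (1 - θ) * Real.log ((1 - θ) / (1 - d))) := by
  rw [KLoss, if_neg]
  rintro (⟨-, h⟩ | ⟨-, h⟩)
  · exact hd0 h
  · exact hd1 h

lemma risk_eq {θ p q : ℝ} (hθ0 : 0 ≤ θ) (hθ1 : θ ≤ 1) (hp0 : 0 < p) (hp1 : p < 1)
    (hq0 : 0 < q) (hq1 : q < 1) :
    risk (p, q) θ = ENNReal.ofReal (Sfun θ p q) := by
  simp only [risk]
  rw [KLoss_eq hp0.ne' hp1.ne, KLoss_eq hq0.ne' hq1.ne,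
    ← ENNReal.ofReal_mul (show (0:ℝ) ≤ 1 - θ by linarith), ← ENNReal.ofReal_mul hθ0,
    ← ENNReal.ofReal_add (mul_nonneg (by linarith) (kl_nonneg hθ0 hθ1 hp0 hp1))
      (mul_nonneg hθ0 (kl_nonneg hθ0 hθ1 hq0 hq1))]
  rfl

lemma Sfun_nonneg {θ p q : ℝ} (hθ0 : 0 ≤ θ) (hθ1 : θ ≤ 1) (hp0 : 0 < p) (hp1 : p < 1)
    (hq0 : 0 < q) (hq1 : q < 1) : 0 ≤ Sfun θ p q :=
  add_nonneg (mul_nonneg (by linarith) (kl_nonneg hθ0 hθ1 hp0 hp1))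
    (mul_nonneg hθ0 (kl_nonneg hθ0 hθ1 hq0 hq1))

lemma risk_ge {θ p q : ℝ} (hθ0 : 0 ≤ θ) (hθ1 : θ ≤ 1) (hp0 : p ≠ 0) (hp1 : p ≠ 1)
    (hq0 : q ≠ 0) (hq1 : q ≠ 1) :
    ENNReal.ofReal (Sfun θ p q) ≤ risk (p, q) θ := by
  simp only [risk]
  rw [KLoss_eq hp0 hp1, KLoss_eq hq0 hq1,
    ← ENNReal.ofReal_mul (show (0:ℝ) ≤ 1 - θ by linarith), ← ENNReal.ofReal_mul hθ0]
  exact ENNReal.ofReal_add_le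

lemma risk_zero {a b : ℝ} (ha : a ≠ 1) :
    risk (a, b) 0 = ENNReal.ofReal (-Real.log (1 - a)) := by
  have hK : KLoss 0 a = ENNReal.ofReal (-Real.log (1 - a)) := by
    rw [KLoss, if_neg (by rintro (⟨h, -⟩ | ⟨-, h⟩); exacts [h rfl, ha h])]
    norm_num [one_div, Real.log_inv]
  simp [risk, hK]

lemma risk_one {a b : ℝ} (hb : b ≠ 0) :
    risk (a, b) 1 = ENNReal.ofReal (-Real.log b) := by
  have hK : KLoss 1 b = ENNReal.ofReal (-Real.log b) := by
    rw [KLoss, if_neg (by rintro (⟨-, h⟩ | ⟨h, -⟩); exacts [hb h, h rfl])]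
    norm_num [one_div, Real.log_inv]
  simp [risk, hK]

lemma aux_thetaC {w z : ℝ} (hw : 0 < w) (hz : 0 < z) :
    0 < z / (2 * (w + z)) ∧ z / (2 * (w + z)) < 1 ∧
      0 < (z / (2 * (w + z))) * ((1 - z / (2 * (w + z))) * z - (z / (2 * (w + z))) * w) := by
  have hs : 0 < w + z := by linarith
  refine ⟨by positivity, ?_, ?_⟩
  · rw [div_lt_one (by linarith)]; linarith
  · have h1 : (1 - z / (2 * (w + z))) * z - (z / (2 * (w + z))) * w = z / 2 := by
      field_simp; ring
    rw [h1]; positivity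

lemma aux_thetaB {u v : ℝ} (hu : 0 < u) (hv : 0 < v) :
    0 < (2 * v + u) / (2 * (u + v)) ∧ (2 * v + u) / (2 * (u + v)) < 1 ∧
      0 < (1 - (2 * v + u) / (2 * (u + v))) *
          (((2 * v + u) / (2 * (u + v))) * u - (1 - (2 * v + u) / (2 * (u + v))) * v) := by
  have hs : 0 < u + v := by linarith
  have h1 : 1 - (2 * v + u) / (2 * (u + v)) = u / (2 * (u + v)) := by field_simp; ring
  refine ⟨by positivity, ?_, ?_⟩
  · rw [div_lt_one (by linarith)]; linarith
  · rw [h1]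
    have h2 : ((2 * v + u) / (2 * (u + v))) * u - (u / (2 * (u + v))) * v = u / 2 := by
      field_simp; ring
    rw [h2]; positivity

lemma aux_thetaD {u v w z : ℝ} (hu : 0 < u) (hv : 0 < v) (hprod : v * w < u * z) :
    0 < v / (u + v) ∧ v / (u + v) < 1 ∧
      0 < (1 - v / (u + v)) * ((v / (u + v)) * u - (1 - v / (u + v)) * v) +
          (v / (u + v)) * ((1 - v / (u + v)) * z - (v / (u + v)) * w) := by
  have hs : 0 < u + v := by linarith
  have h1 : 1 - v / (u + v) = u / (u + v) := by field_simp; ring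
  refine ⟨by positivity, by rw [div_lt_one hs]; linarith, ?_⟩
  rw [h1]
  have h2 : (v / (u + v)) * u - (u / (u + v)) * v = 0 := by field_simp; ring
  have h3 : (u / (u + v)) * z - (v / (u + v)) * w = (u * z - v * w) / (u + v) := by
    field_simp
  rw [h2, h3, mul_zero, zero_add]
  exact mul_pos (div_pos hv hs) (div_pos (by linarith) hs)

/-- Every decision `(δ₀, δ₁)` with `0 < δ₀ < δ₁ < 1` is admissible: no decision in
`[0,1]²` dominates it. -/
theorem increasing_interior_admissible (δ₀ δ₁ : ℝ)
    (h1 : 0 < δ₀) (h2 : δ₀ < δ₁) (h3 : δ₁ < 1) :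
    ∀ δ' : ℝ × ℝ, δ'.1 ∈ Set.Icc (0 : ℝ) 1 → δ'.2 ∈ Set.Icc (0 : ℝ) 1 →
      ¬ Dominates δ' (δ₀, δ₁) := by
  have hδ₀1 : δ₀ < 1 := h2.trans h3
  have hδ₁0 : 0 < δ₁ := h1.trans h2
  rintro ⟨p, q⟩ ⟨hp0, hp1⟩ ⟨hq0, hq1⟩ ⟨hle, θs, hθs, hlt⟩
  have hfin : ∀ θ ∈ Set.Icc (0:ℝ) 1, risk (δ₀, δ₁) θ ≠ ⊤ := by
    intro θ hθ
    rw [risk_eq hθ.1 hθ.2 h1 hδ₀1 hδ₁0 h3]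
    exact ENNReal.ofReal_ne_top
  -- p < 1
  have hp1' : p < 1 := by
    rcases lt_or_eq_of_le hp1 with h | h
    · exact h
    · exfalso
      have h0 := hle 0 ⟨le_refl 0, zero_le_one⟩
      have hKt : KLoss 0 p = ⊤ := by
        rw [KLoss, if_pos (Or.inr ⟨by norm_num, h⟩)]
      have : risk (p, q) 0 = ⊤ := by
        simp [risk, hKt]
      rw [this] at h0
      exact hfin 0 ⟨le_refl 0, zero_le_one⟩ (top_le_iff.mp h0)
  -- 0 < q
  have hq0' : 0 < q := by
    rcases lt_or_eq_of_le hq0 with h | h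
    · exact h
    · exfalso
      have h0 := hle 1 ⟨zero_le_one, le_refl 1⟩
      have hKt : KLoss 1 q = ⊤ := by
        rw [KLoss, if_pos (Or.inl ⟨by norm_num, h.symm⟩)]
      have : risk (p, q) 1 = ⊤ := by
        simp [risk, hKt]
      rw [this] at h0
      exact hfin 1 ⟨zero_le_one, le_refl 1⟩ (top_le_iff.mp h0)
  -- p ≤ δ₀
  have hpδ₀ : p ≤ δ₀ := by
    have h0 := hle 0 ⟨le_refl 0, zero_le_one⟩
    rw [risk_zero hp1'.ne, risk_zero hδ₀1.ne] at h0
    have hlog : -Real.log (1 - p) ≤ -Real.log (1 - δ₀) :=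
      (ENNReal.ofReal_le_ofReal_iff
        (neg_nonneg.mpr (Real.log_nonpos (by linarith) (by linarith)))).mp h0
    have h4 : (1:ℝ) - δ₀ ≤ 1 - p := by
      have := Real.exp_le_exp.mpr (show Real.log (1-δ₀) ≤ Real.log (1-p) by linarith)
      rwa [Real.exp_log (by linarith), Real.exp_log (by linarith)] at this
    linarith
  -- δ₁ ≤ q
  have hδ₁q : δ₁ ≤ q := by
    have h0 := hle 1 ⟨zero_le_one, le_refl 1⟩
    rw [risk_one hq0'.ne', risk_one hδ₁0.ne'] at h0
    have hlog : -Real.log q ≤ -Real.log δ₁ :=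
      (ENNReal.ofReal_le_ofReal_iff
        (neg_nonneg.mpr (Real.log_nonpos (by linarith) (by linarith)))).mp h0
    have h4 : δ₁ ≤ q := by
      have := Real.exp_le_exp.mpr (show Real.log δ₁ ≤ Real.log q by linarith)
      rwa [Real.exp_log hδ₁0, Real.exp_log hq0'] at this
    exact h4
  -- 0 < p
  have hp0' : 0 < p := by
    rcases lt_or_eq_of_le hp0 with h | h
    · exact h
    · exfalso
      have h0 := hle (1/2) ⟨by norm_num, by norm_num⟩
      have hKt : KLoss (1/2) p = ⊤ := by
        rw [KLoss, if_pos (Or.inl ⟨by norm_num, h.symm⟩)]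
      have : risk (p, q) (1/2) = ⊤ := by
        simp only [risk, hKt]
        rw [ENNReal.mul_top (ENNReal.ofReal_pos.mpr (by norm_num)).ne', top_add]
      rw [this] at h0
      exact hfin (1/2) ⟨by norm_num, by norm_num⟩ (top_le_iff.mp h0)
  -- q < 1
  have hq1' : q < 1 := by
    rcases lt_or_eq_of_le hq1 with h | h
    · exact h
    · exfalso
      have h0 := hle (1/2) ⟨by norm_num, by norm_num⟩
      have hKt : KLoss (1/2) q = ⊤ := by
        rw [KLoss, if_pos (Or.inr ⟨by norm_num, h⟩)]
      have : risk (p, q) (1/2) = ⊤ := by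
        simp only [risk, hKt]
        rw [ENNReal.mul_top (ENNReal.ofReal_pos.mpr (by norm_num)).ne', add_top]
      rw [this] at h0
      exact hfin (1/2) ⟨by norm_num, by norm_num⟩ (top_le_iff.mp h0)
  -- general final contradiction machine
  have final : ∀ θ : ℝ, 0 < θ → θ < 1 →
      0 < (1-θ) * (θ * (Real.log δ₀ - Real.log p) -
            (1-θ) * (Real.log (1-p) - Real.log (1-δ₀)))
          + θ * ((1-θ) * (Real.log (1-δ₁) - Real.log (1-q)) -
            θ * (Real.log q - Real.log δ₁)) → False := by
    intro θ hθ0 hθ1 hkey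
    have hθne : θ ≠ 0 := hθ0.ne'
    have h1θne : (1:ℝ) - θ ≠ 0 := by intro h; linarith [h]
    have hdiff : Sfun θ p q - Sfun θ δ₀ δ₁ =
        (1-θ) * (θ * (Real.log δ₀ - Real.log p) -
          (1-θ) * (Real.log (1-p) - Real.log (1-δ₀)))
        + θ * ((1-θ) * (Real.log (1-δ₁) - Real.log (1-q)) -
          θ * (Real.log q - Real.log δ₁)) := by
      simp only [Sfun,
        Real.log_div hθne h1.ne', Real.log_div h1θne (show (1:ℝ)-δ₀ ≠ 0 by intro h; linarith),
        Real.log_div hθne hδ₁0.ne', Real.log_div h1θne (show (1:ℝ)-δ₁ ≠ 0 by intro h; linarith),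
        Real.log_div hθne hp0'.ne', Real.log_div h1θne (show (1:ℝ)-p ≠ 0 by intro h; linarith),
        Real.log_div hθne hq0'.ne', Real.log_div h1θne (show (1:ℝ)-q ≠ 0 by intro h; linarith)]
      ring
    have hSd : Sfun θ δ₀ δ₁ < Sfun θ p q := by linarith
    have hlt2 : risk (δ₀, δ₁) θ < risk (p, q) θ := by
      rw [risk_eq hθ0.le hθ1.le h1 hδ₀1 hδ₁0 h3]
      refine lt_of_lt_of_le ?_ (risk_ge hθ0.le hθ1.le hp0'.ne' hp1'.ne hq0'.ne' hq1'.ne)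
      exact (ENNReal.ofReal_lt_ofReal_iff
        (lt_of_le_of_lt (Sfun_nonneg hθ0.le hθ1.le h1 hδ₀1 hδ₁0 h3) hSd)).mpr hSd
    exact absurd (hle θ ⟨hθ0.le, hθ1.le⟩) (not_le.mpr hlt2)
  rcases eq_or_lt_of_le hpδ₀ with hpe | hplt
  · rcases eq_or_lt_of_le hδ₁q with hqe | hqlt
    · -- p = δ₀, q = δ₁ : no strict inequality possible
      subst hpe; subst hqe
      exact absurd hlt (lt_irrefl _)
    · -- case C : p = δ₀, δ₁ < q
      subst hpe
      have hw : 0 < Real.log q - Real.log δ₁ :=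
        sub_pos.mpr (Real.log_lt_log hδ₁0 hqlt)
      have hz : 0 < Real.log (1-δ₁) - Real.log (1-q) :=
        sub_pos.mpr (Real.log_lt_log (by linarith) (by linarith))
      obtain ⟨ht0, ht1, hpos⟩ := aux_thetaC hw hz
      exact final _ ht0 ht1 (by linarith [hpos])
  · rcases eq_or_lt_of_le hδ₁q with hqe | hqlt
    · -- case B : p < δ₀, q = δ₁
      subst hqe
      have hu : 0 < Real.log δ₀ - Real.log p :=
        sub_pos.mpr (Real.log_lt_log hp0' hplt)
      have hv : 0 < Real.log (1-p) - Real.log (1-δ₀) :=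
        sub_pos.mpr (Real.log_lt_log (by linarith) (by linarith))
      obtain ⟨ht0, ht1, hpos⟩ := aux_thetaB hu hv
      exact final _ ht0 ht1 (by linarith [hpos])
    · -- case D : p < δ₀, δ₁ < q
      have hu : 0 < Real.log δ₀ - Real.log p :=
        sub_pos.mpr (Real.log_lt_log hp0' hplt)
      have hv : 0 < Real.log (1-p) - Real.log (1-δ₀) :=
        sub_pos.mpr (Real.log_lt_log (by linarith) (by linarith))
      have hw : 0 < Real.log q - Real.log δ₁ :=
        sub_pos.mpr (Real.log_lt_log hδ₁0 hqlt)
      have hz : 0 < Real.log (1-δ₁) - Real.log (1-q) :=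
        sub_pos.mpr (Real.log_lt_log (by linarith) (by linarith))
      have hA : (1-δ₀) * (Real.log (1-p) - Real.log (1-δ₀)) <
          δ₀ * (Real.log δ₀ - Real.log p) := key_log_ineq hp0' hplt hδ₀1
      have hB : δ₁ * (Real.log q - Real.log δ₁) <
          (1-δ₁) * (Real.log (1-δ₁) - Real.log (1-q)) := key_log_ineq' hδ₁0 hqlt hq1'
      have hprod : (Real.log (1-p) - Real.log (1-δ₀)) * (Real.log q - Real.log δ₁) <
          (Real.log δ₀ - Real.log p) * (Real.log (1-δ₁) - Real.log (1-q)) := by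
        set u := Real.log δ₀ - Real.log p
        set v := Real.log (1-p) - Real.log (1-δ₀)
        set w := Real.log q - Real.log δ₁
        set z := Real.log (1-δ₁) - Real.log (1-q)
        have t1 : ((1-δ₀)*v) * (δ₁*w) < (δ₀*u) * (δ₁*w) :=
          mul_lt_mul_of_pos_right hA (mul_pos hδ₁0 hw)
        have t2 : (δ₀*u) * (δ₁*w) < (δ₀*u) * ((1-δ₁)*z) :=
          mul_lt_mul_of_pos_left hB (mul_pos h1 hu)
        have hposC : (0:ℝ) < (1-δ₀)*δ₁ := mul_pos (by linarith) hδ₁0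
        have t3 : ((1-δ₀)*δ₁)*(v*w) < ((1-δ₀)*δ₁)*(u*z) := by
          nlinarith [t1, t2, mul_pos (sub_pos.mpr h2) (mul_pos hu hz)]
        exact lt_of_mul_lt_mul_left t3 hposC.le
      obtain ⟨ht0, ht1, hpos⟩ := aux_thetaD hu hv hprod
      exact final _ ht0 ht1 (by linarith [hpos])
end

section
/- Let a ≥ 1/3 and set δ₀ = a/(2a+1), δ₁ = (a+1)/(2a+1). Then sup_{θ ∈ [0,1]} R_{(δ₀,δ₁)}(θ) = log((2a+1)/(a+1)). -/
/-- The Kullback–Leibler loss `L(θ,d) = θ·log(θ/d) + (1−θ)·log((1−θ)/(1−d))` for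
`d ∈ (0,1)`, with the convention `0 · log 0 = 0` (which holds automatically in Lean
since `Real.log 0 = 0`). -/
noncomputable def KLossR (θ d : ℝ) : ℝ :=
  θ * Real.log (θ / d) + (1 - θ) * Real.log ((1 - θ) / (1 - d))

/-- The risk function `R_δ(θ) = (1−θ)·L(θ,δ₀) + θ·L(θ,δ₁)` of a decision
`δ = (δ₀, δ₁) ∈ (0,1)²`. -/
noncomputable def riskR (δ : ℝ × ℝ) (θ : ℝ) : ℝ :=
  (1 - θ) * KLossR θ δ.1 + θ * KLossR θ δ.2

/- ### Auxiliary material for the key entropy inequality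
`-(p log p + (1-p) log (1-p)) ≥ 4 log 2 · p(1-p)` on `[0,1]`. -/

noncomputable def Vfun (x : ℝ) : ℝ :=
  2 * Real.log 2 * x ^ 2 - ((1 + x) * Real.log (1 + x) + (1 - x) * Real.log (1 - x))

noncomputable def Wfun (x : ℝ) : ℝ :=
  4 * Real.log 2 * x - Real.log (1 + x) + Real.log (1 - x)

lemma half_lt_log_two : (1 : ℝ) / 2 < Real.log 2 := by
  have := Real.log_two_gt_d9
  linarith

lemma continuous_Vfun : Continuous Vfun := by
  have h1 : Continuous fun x : ℝ => (1 + x) * Real.log (1 + x) :=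
    Real.continuous_mul_log.comp (continuous_const.add continuous_id)
  have h2 : Continuous fun x : ℝ => (1 - x) * Real.log (1 - x) :=
    Real.continuous_mul_log.comp (continuous_const.sub continuous_id)
  exact ((continuous_const.mul (continuous_pow 2)).sub (h1.add h2))

lemma hasDerivAt_Vfun {x : ℝ} (h1 : -1 < x) (h2 : x < 1) :
    HasDerivAt Vfun (Wfun x) x := by
  have h1x : (1 : ℝ) + x ≠ 0 := by linarith
  have h2x : (1 : ℝ) - x ≠ 0 := by linarith
  have hA : HasDerivAt (fun y : ℝ => (1 + y) * Real.log (1 + y))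
      ((Real.log (1 + x) + 1) * 1) x :=
    (Real.hasDerivAt_mul_log h1x).comp x ((hasDerivAt_id x).const_add 1)
  have hB : HasDerivAt (fun y : ℝ => (1 - y) * Real.log (1 - y))
      ((Real.log (1 - x) + 1) * (-1)) x :=
    (Real.hasDerivAt_mul_log h2x).comp x ((hasDerivAt_id x).const_sub 1)
  have hC : HasDerivAt (fun y : ℝ => 2 * Real.log 2 * y ^ 2)
      (2 * Real.log 2 * (2 * x ^ 1)) x :=
    (hasDerivAt_pow 2 x).const_mul (2 * Real.log 2)
  have := hC.sub (hA.add hB)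
  refine this.congr_deriv ?_
  unfold Wfun
  ring

lemma hasDerivAt_Wfun {x : ℝ} (h1 : -1 < x) (h2 : x < 1) :
    HasDerivAt Wfun (4 * Real.log 2 - 1 / (1 + x) - 1 / (1 - x)) x := by
  have h1x : (1 : ℝ) + x ≠ 0 := by linarith
  have h2x : (1 : ℝ) - x ≠ 0 := by linarith
  have hA : HasDerivAt (fun y : ℝ => Real.log (1 + y)) ((1 + x)⁻¹ * 1) x :=
    (Real.hasDerivAt_log h1x).comp x ((hasDerivAt_id x).const_add 1)
  have hB : HasDerivAt (fun y : ℝ => Real.log (1 - y)) ((1 - x)⁻¹ * (-1)) x :=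
    (Real.hasDerivAt_log h2x).comp x ((hasDerivAt_id x).const_sub 1)
  have hC : HasDerivAt (fun y : ℝ => 4 * Real.log 2 * y) (4 * Real.log 2 * 1) x :=
    (hasDerivAt_id x).const_mul (4 * Real.log 2)
  have := (hC.sub hA).add hB
  refine this.congr_deriv ?_
  field_simp
  ring

/-- The split point for the convex/concave analysis. -/
noncomputable def sxp : ℝ := Real.sqrt (1 - 1 / (2 * Real.log 2))

lemma sxp_sq : sxp ^ 2 = 1 - 1 / (2 * Real.log 2) := by
  have hL := half_lt_log_two
  have h0 : (0 : ℝ) ≤ 1 - 1 / (2 * Real.log 2) := by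
    have : 1 / (2 * Real.log 2) < 1 := by
      rw [div_lt_one (by linarith)]
      linarith
    linarith
  exact Real.sq_sqrt h0

lemma sxp_nonneg : 0 ≤ sxp := Real.sqrt_nonneg _

lemma sxp_lt_one : sxp < 1 := by
  have hL := half_lt_log_two
  have h := sxp_sq
  nlinarith [sxp_nonneg, one_div_pos.mpr (by linarith : (0:ℝ) < 2 * Real.log 2)]

lemma Wfun_zero : Wfun 0 = 0 := by simp [Wfun]

lemma Vfun_zero : Vfun 0 = 0 := by simp [Vfun]

lemma Vfun_one : Vfun 1 = 0 := by
  unfold Vfun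
  norm_num

lemma Wfun_nonneg : ∀ x ∈ Set.Icc (0 : ℝ) sxp, 0 ≤ Wfun x := by
  have hL := half_lt_log_two
  have hs1 := sxp_lt_one
  have hs0 := sxp_nonneg
  have hmono : MonotoneOn Wfun (Set.Icc (0 : ℝ) sxp) := by
    apply monotoneOn_of_deriv_nonneg (convex_Icc _ _)
    · intro x hx
      exact (hasDerivAt_Wfun (by linarith [hx.1]) (by linarith [hx.2])).continuousAt.continuousWithinAt
    · rw [interior_Icc]
      intro x hx
      exact (hasDerivAt_Wfun (by linarith [hx.1]) (by linarith [hx.2])).differentiableAt.differentiableWithinAt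
    · rw [interior_Icc]
      intro x hx
      rw [(hasDerivAt_Wfun (by linarith [hx.1]) (by linarith [hx.2])).deriv]
      have hx0 : 0 < x := hx.1
      have hx1 : x < 1 := lt_of_lt_of_le hx.2 hs1.le
      have hxx : x ^ 2 ≤ sxp ^ 2 := by nlinarith [hx.2]
      rw [sxp_sq] at hxx
      have h1p : (0 : ℝ) < 1 + x := by linarith
      have h1m : (0 : ℝ) < 1 - x := by linarith
      have hprod : (0 : ℝ) < (1 + x) * (1 - x) := mul_pos h1p h1m
      have h2L : (0 : ℝ) < 2 * Real.log 2 := by linarith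
      have e : 4 * Real.log 2 - 1 / (1 + x) - 1 / (1 - x) =
          (4 * Real.log 2 * ((1 + x) * (1 - x)) - 2) / ((1 + x) * (1 - x)) := by
        field_simp
        ring
      have hmul : (1 : ℝ) ≤ (1 - x ^ 2) * (2 * Real.log 2) := by
        have h' : 1 / (2 * Real.log 2) ≤ 1 - x ^ 2 := by linarith
        have := mul_le_mul_of_nonneg_right h' h2L.le
        rwa [one_div, inv_mul_cancel₀ h2L.ne'] at this
      rw [e]
      apply div_nonneg _ hprod.le
      nlinarith
  intro x hx
  have := hmono (Set.left_mem_Icc.mpr hs0) hx hx.1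
  rwa [Wfun_zero] at this

lemma Vfun_nonneg_left : ∀ x ∈ Set.Icc (0 : ℝ) sxp, 0 ≤ Vfun x := by
  have hs1 := sxp_lt_one
  have hs0 := sxp_nonneg
  have hmono : MonotoneOn Vfun (Set.Icc (0 : ℝ) sxp) := by
    apply monotoneOn_of_deriv_nonneg (convex_Icc _ _) continuous_Vfun.continuousOn
    · rw [interior_Icc]
      intro x hx
      exact (hasDerivAt_Vfun (by linarith [hx.1]) (by linarith [hx.2])).differentiableAt.differentiableWithinAt
    · rw [interior_Icc]
      intro x hx
      rw [(hasDerivAt_Vfun (by linarith [hx.1]) (by linarith [hx.2])).deriv]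
      exact Wfun_nonneg x ⟨hx.1.le, hx.2.le⟩
  intro x hx
  have := hmono (Set.left_mem_Icc.mpr hs0) hx hx.1
  rwa [Vfun_zero] at this

lemma Vfun_concave : ConcaveOn ℝ (Set.Icc sxp 1) Vfun := by
  have hL := half_lt_log_two
  have hs1 := sxp_lt_one
  have hs0 := sxp_nonneg
  apply concaveOn_of_hasDerivWithinAt2_nonpos (convex_Icc _ _)
    continuous_Vfun.continuousOn
    (f' := Wfun) (f'' := fun x => 4 * Real.log 2 - 1 / (1 + x) - 1 / (1 - x))
  · rw [interior_Icc]
    intro x hx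
    exact (hasDerivAt_Vfun (by linarith [hx.1]) (by linarith [hx.2])).hasDerivWithinAt
  · rw [interior_Icc]
    intro x hx
    exact (hasDerivAt_Wfun (by linarith [hx.1]) (by linarith [hx.2])).hasDerivWithinAt
  · rw [interior_Icc]
    intro x hx
    have hx0 : 0 < x := lt_of_le_of_lt hs0 hx.1
    have hx1 : x < 1 := hx.2
    have hxx : sxp ^ 2 ≤ x ^ 2 := by nlinarith [hx.1]
    rw [sxp_sq] at hxx
    have h1p : (0 : ℝ) < 1 + x := by linarith
    have h1m : (0 : ℝ) < 1 - x := by linarith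
    have hprod : (0 : ℝ) < (1 + x) * (1 - x) := mul_pos h1p h1m
    have h2L : (0 : ℝ) < 2 * Real.log 2 := by linarith
    have e : 4 * Real.log 2 - 1 / (1 + x) - 1 / (1 - x) =
        (4 * Real.log 2 * ((1 + x) * (1 - x)) - 2) / ((1 + x) * (1 - x)) := by
      field_simp
      ring
    have hmul : (1 - x ^ 2) * (2 * Real.log 2) ≤ 1 := by
      have h' : 1 - x ^ 2 ≤ 1 / (2 * Real.log 2) := by linarith
      have := mul_le_mul_of_nonneg_right h' h2L.le
      rwa [one_div, inv_mul_cancel₀ h2L.ne'] at this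
    rw [e]
    apply div_nonpos_of_nonpos_of_nonneg _ hprod.le
    nlinarith

lemma Vfun_nonneg : ∀ x ∈ Set.Icc (0 : ℝ) 1, 0 ≤ Vfun x := by
  intro x hx
  rcases le_or_gt x sxp with h | h
  · exact Vfun_nonneg_left x ⟨hx.1, h⟩
  · have hs1 := sxp_lt_one
    have hs0 := sxp_nonneg
    have hseg : x ∈ segment ℝ sxp (1 : ℝ) := by
      rw [segment_eq_Icc hs1.le]
      exact ⟨h.le, hx.2⟩
    have := Vfun_concave.ge_on_segment (Set.left_mem_Icc.mpr hs1.le)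
      (Set.right_mem_Icc.mpr hs1.le) hseg
    have hVs : 0 ≤ Vfun sxp := Vfun_nonneg_left sxp ⟨hs0, le_refl _⟩
    rw [Vfun_one] at this
    exact le_trans (le_min hVs le_rfl) this

lemma entropy_ineq_half (p : ℝ) (hp0 : 0 ≤ p) (hp2 : p ≤ 1 / 2) :
    4 * Real.log 2 * (p * (1 - p)) ≤ -(p * Real.log p + (1 - p) * Real.log (1 - p)) := by
  rcases eq_or_lt_of_le hp0 with h | h
  · simp [← h]
  · have hv := Vfun_nonneg (1 - 2 * p) ⟨by linarith, by linarith⟩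
    unfold Vfun at hv
    rw [show (1 : ℝ) + (1 - 2 * p) = 2 * (1 - p) by ring,
        show (1 : ℝ) - (1 - 2 * p) = 2 * p by ring] at hv
    have hp1 : (0 : ℝ) < 1 - p := by linarith
    rw [Real.log_mul two_ne_zero (by linarith : (1:ℝ) - p ≠ 0),
        Real.log_mul two_ne_zero h.ne'] at hv
    nlinarith [hv]

lemma entropy_ineq (p : ℝ) (hp : p ∈ Set.Icc (0 : ℝ) 1) :
    4 * Real.log 2 * (p * (1 - p)) ≤ -(p * Real.log p + (1 - p) * Real.log (1 - p)) := by
  rcases le_or_gt p (1 / 2) with h | h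
  · exact entropy_ineq_half p hp.1 h
  · have h' := entropy_ineq_half (1 - p) (by linarith [hp.2]) (by linarith)
    rw [show (1 : ℝ) - (1 - p) = p by ring] at h'
    nlinarith [h']

lemma mul_log_div (t d : ℝ) (ht : 0 ≤ t) (hd : 0 < d) :
    t * Real.log (t / d) = t * Real.log t - t * Real.log d := by
  rcases eq_or_lt_of_le ht with h | h
  · simp [← h]
  · rw [Real.log_div h.ne' hd.ne']
    ring

lemma risk_le (a θ : ℝ) (ha : 1 / 3 ≤ a) (hθ : θ ∈ Set.Icc (0 : ℝ) 1) :
    riskR (a / (2 * a + 1), (a + 1) / (2 * a + 1)) θ ≤ Real.log ((2 * a + 1) / (a + 1)) := by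
  have ha0 : (0 : ℝ) < a := by linarith
  have hc : (0 : ℝ) < 2 * a + 1 := by linarith
  have ha1 : (0 : ℝ) < a + 1 := by linarith
  have hδ0 : (0 : ℝ) < a / (2 * a + 1) := div_pos ha0 hc
  have hδ1 : (0 : ℝ) < (a + 1) / (2 * a + 1) := div_pos ha1 hc
  have hθ0 := hθ.1
  have hθ1 := hθ.2
  have h10 : 1 - a / (2 * a + 1) = (a + 1) / (2 * a + 1) := by
    field_simp
    ring
  have h11 : 1 - (a + 1) / (2 * a + 1) = a / (2 * a + 1) := by
    field_simp
    ring
  have key : riskR (a / (2 * a + 1), (a + 1) / (2 * a + 1)) θ =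
      (θ * Real.log θ + (1 - θ) * Real.log (1 - θ))
        - 2 * θ * (1 - θ) * (Real.log a - Real.log (2 * a + 1))
        - (θ ^ 2 + (1 - θ) ^ 2) * (Real.log (a + 1) - Real.log (2 * a + 1)) := by
    unfold riskR KLossR
    simp only
    rw [h10, h11]
    rw [mul_log_div θ _ hθ0 hδ0, mul_log_div θ _ hθ0 hδ1,
        mul_log_div (1 - θ) _ (by linarith) hδ1, mul_log_div (1 - θ) _ (by linarith) hδ0]
    rw [Real.log_div ha0.ne' hc.ne', Real.log_div ha1.ne' hc.ne']
    ring
  rw [key, Real.log_div hc.ne' ha1.ne']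
  have hE := entropy_ineq θ hθ
  have hlog : Real.log (a + 1) - Real.log a ≤ 2 * Real.log 2 := by
    have h4 : Real.log (a + 1) ≤ Real.log (4 * a) :=
      Real.log_le_log ha1 (by linarith)
    rw [Real.log_mul (by norm_num) ha0.ne'] at h4
    have hl4 : Real.log 4 = 2 * Real.log 2 := by
      rw [show (4 : ℝ) = 2 ^ 2 by norm_num, Real.log_pow]
      push_cast
      ring
    linarith
  have ht : 0 ≤ θ * (1 - θ) := mul_nonneg hθ0 (by linarith)
  nlinarith [hE, mul_le_mul_of_nonneg_left hlog ht]

/-- For `a ≥ 1/3`, the worst-case risk of the Beta(a,a)-Bayes decision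
`(a/(2a+1), (a+1)/(2a+1))` equals `log((2a+1)/(a+1))`. -/
theorem worst_case_risk_large_a (a : ℝ) (ha : 1 / 3 ≤ a) :
    sSup (riskR (a / (2 * a + 1), (a + 1) / (2 * a + 1)) '' Set.Icc (0 : ℝ) 1) =
      Real.log ((2 * a + 1) / (a + 1)) := by
  have ha0 : (0 : ℝ) < a := by linarith
  have hc : (0 : ℝ) < 2 * a + 1 := by linarith
  have ha1 : (0 : ℝ) < a + 1 := by linarith
  apply IsGreatest.csSup_eq
  constructor
  · refine ⟨0, Set.left_mem_Icc.mpr zero_le_one, ?_⟩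
    have h10 : 1 - a / (2 * a + 1) = (a + 1) / (2 * a + 1) := by
      field_simp
      ring
    have : riskR (a / (2 * a + 1), (a + 1) / (2 * a + 1)) 0 =
        Real.log (1 / (1 - a / (2 * a + 1))) := by
      simp [riskR, KLossR]
    rw [this, h10, one_div_div]
  · rintro y ⟨θ, hθ, rfl⟩
    exact risk_le a θ ha hθ
end
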